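/- arXiv:math/0103111 — 3 statements merged into one kernel-verified Lean document; each statement's English description precedes it below -/
import Mathlib

section
/- Let g ≥ 2 and 1 ≤ k ≤ g−1. The endomorphism ψ_k of the free group F_{2g} defined on generators by ψ_k(α_m) = α_{k+1} α_m α_{k+1}⁻¹ and ψ_k(β_m) = α_{k+1} β_m α_{k+1}⁻¹ for m ∉ {k, k+1}, ψ_k(α_k) = α_{k+1} α_k, ψ_k(β_k) = β_k, ψ_k(α_{k+1}) = β_k α_{k+1} β_k⁻¹, and ψ_k(β_{k+1}) = α_{k+1} β_{k+1} α_{k+1}⁻¹ β_k⁻¹, is an automorphism of F_{2g}, and it satisfies ψ_k(R) = α_{k+1} R α_{k+1}⁻¹. -/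
/-- The generator `α_{m+1}` of the free group `F_{2g}`. -/
def genA (g : ℕ) (m : Fin g) : FreeGroup (Fin g ⊕ Fin g) := FreeGroup.of (Sum.inl m)

/-- The generator `β_{m+1}` of the free group `F_{2g}`. -/
def genB (g : ℕ) (m : Fin g) : FreeGroup (Fin g ⊕ Fin g) := FreeGroup.of (Sum.inr m)

open scoped commutatorElement

/-- The surface relation `R = [α₁,β₁]⋯[α_g,β_g]`. -/
def surfaceRel (g : ℕ) : FreeGroup (Fin g ⊕ Fin g) :=
  (List.ofFn fun m : Fin g => ⁅genA g m, genB g m⁆).prod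

/-- Telescoping lemma for products of conjugated factors. -/
lemma telescope_ofFn_prod {G : Type*} [Group G] :
    ∀ (n : ℕ) (u : ℕ → G) (c : Fin n → G),
    (List.ofFn fun m : Fin n => u (m : ℕ) * c m * (u ((m : ℕ) + 1))⁻¹).prod
      = u 0 * (List.ofFn c).prod * (u n)⁻¹ := by
  intro n
  induction n with
  | zero => intro u c; simp
  | succ n ih =>
    intro u c
    rw [List.ofFn_succ (f := fun m : Fin (n+1) => u (m : ℕ) * c m * (u ((m : ℕ) + 1))⁻¹),
      List.ofFn_succ (f := c), List.prod_cons, List.prod_cons]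
    have h := ih (fun i => u (i + 1)) (fun m => c m.succ)
    simp only [Fin.val_succ] at *
    rw [h]
    simp only [Fin.val_zero, Nat.zero_add, Nat.add_zero]
    group

/-- For `g ≥ 2` and `1 ≤ k ≤ g−1`, the endomorphism `ψ_k` of `F_{2g}` with
`ψ_k(α_m) = α_{k+1} α_m α_{k+1}⁻¹`, `ψ_k(β_m) = α_{k+1} β_m α_{k+1}⁻¹` for `m ∉ {k, k+1}`,
`ψ_k(α_k) = α_{k+1} α_k`, `ψ_k(β_k) = β_k`, `ψ_k(α_{k+1}) = β_k α_{k+1} β_k⁻¹` and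
`ψ_k(β_{k+1}) = α_{k+1} β_{k+1} α_{k+1}⁻¹ β_k⁻¹` is an automorphism of `F_{2g}` and
satisfies `ψ_k(R) = α_{k+1} R α_{k+1}⁻¹`.
(The generator `α_m`, `1 ≤ m ≤ g`, is `genA g ⟨m−1,_⟩`; similarly for `β_m`.) -/
theorem psi_k_is_automorphism_and_conjugates_R
    (g k : ℕ) (hg : 2 ≤ g) (hk1 : 1 ≤ k) (hk2 : k ≤ g - 1)
    (ψ : FreeGroup (Fin g ⊕ Fin g) →* FreeGroup (Fin g ⊕ Fin g))
    (hαm : ∀ m : Fin g, (m : ℕ) ≠ k - 1 → (m : ℕ) ≠ k →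
      ψ (genA g m) = genA g ⟨k, by omega⟩ * genA g m * (genA g ⟨k, by omega⟩)⁻¹)
    (hβm : ∀ m : Fin g, (m : ℕ) ≠ k - 1 → (m : ℕ) ≠ k →
      ψ (genB g m) = genA g ⟨k, by omega⟩ * genB g m * (genA g ⟨k, by omega⟩)⁻¹)
    (hαk : ψ (genA g ⟨k - 1, by omega⟩) = genA g ⟨k, by omega⟩ * genA g ⟨k - 1, by omega⟩)
    (hβk : ψ (genB g ⟨k - 1, by omega⟩) = genB g ⟨k - 1, by omega⟩)
    (hαk1 : ψ (genA g ⟨k, by omega⟩) =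
      genB g ⟨k - 1, by omega⟩ * genA g ⟨k, by omega⟩ * (genB g ⟨k - 1, by omega⟩)⁻¹)
    (hβk1 : ψ (genB g ⟨k, by omega⟩) =
      genA g ⟨k, by omega⟩ * genB g ⟨k, by omega⟩ * (genA g ⟨k, by omega⟩)⁻¹ *
        (genB g ⟨k - 1, by omega⟩)⁻¹) :
    Function.Bijective ψ ∧
      ψ (surfaceRel g) = genA g ⟨k, by omega⟩ * surfaceRel g * (genA g ⟨k, by omega⟩)⁻¹ := by
  have hkg : k < g := by omega
  have hk1g : k - 1 < g := by omega
  set a : Fin g := ⟨k - 1, hk1g⟩ with ha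
  set b : Fin g := ⟨k, hkg⟩ with hb
  set A : FreeGroup (Fin g ⊕ Fin g) := genA g b with hA
  set B : FreeGroup (Fin g ⊕ Fin g) := genB g a with hB
  -- the candidate inverse
  set w : FreeGroup (Fin g ⊕ Fin g) := B⁻¹ * A * B with hw
  set F : Fin g ⊕ Fin g → FreeGroup (Fin g ⊕ Fin g) := fun x =>
    match x with
    | .inl m =>
        if (m : ℕ) = k - 1 then w⁻¹ * genA g m
        else if (m : ℕ) = k then w
        else w⁻¹ * genA g m * w
    | .inr m =>
        if (m : ℕ) = k - 1 then genB g m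
        else if (m : ℕ) = k then w⁻¹ * genB g m * B * w
        else w⁻¹ * genB g m * w
    with hF
  set φ : FreeGroup (Fin g ⊕ Fin g) →* FreeGroup (Fin g ⊕ Fin g) := FreeGroup.lift F with hφ
  have hkk1 : ¬ (k = k - 1) := by omega
  have hφA : φ A = w := by
    rw [hA, genA, hφ, FreeGroup.lift_apply_of, hF]
    simp [hkk1, hb]
  have hφB : φ B = B := by
    rw [hB, genB, hφ, FreeGroup.lift_apply_of, hF]
    simp [genB, ha]
  have hψw : ψ w = A := by
    rw [hw, map_mul, map_mul, map_inv, hB, hβk, hA, hαk1]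
    group
    exact hA
  -- ψ ∘ φ = id on generators
  have hφgenA : ∀ m : Fin g, (m : ℕ) ≠ k - 1 → (m : ℕ) ≠ k →
      φ (genA g m) = w⁻¹ * genA g m * w := by
    intro m h1 h2
    rw [genA, hφ, FreeGroup.lift_apply_of, hF]; simp [h1, h2, genA]
  have hφgenB : ∀ m : Fin g, (m : ℕ) ≠ k - 1 → (m : ℕ) ≠ k →
      φ (genB g m) = w⁻¹ * genB g m * w := by
    intro m h1 h2
    rw [genB, hφ, FreeGroup.lift_apply_of, hF]; simp [h1, h2, genB]
  have hφαa : φ (genA g a) = w⁻¹ * genA g a := by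
    rw [genA, hφ, FreeGroup.lift_apply_of, hF]; simp [genA, ha]
  have hφβb : φ (genB g b) = w⁻¹ * genB g b * B * w := by
    rw [genB, hφ, FreeGroup.lift_apply_of, hF]; simp [hkk1, genB, hb]
  have hψφ : ∀ x, ψ (φ (FreeGroup.of x)) = FreeGroup.of x := by
    rintro (m | m)
    · by_cases h1 : (m : ℕ) = k - 1
      · obtain rfl : m = a := Fin.ext h1
        show ψ (φ (genA g a)) = genA g a
        rw [hφαa, map_mul, map_inv, hψw, hαk]; group
      · by_cases h2 : (m : ℕ) = k
        · obtain rfl : m = b := Fin.ext h2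
          show ψ (φ A) = A
          rw [hφA, hψw]
        · show ψ (φ (genA g m)) = genA g m
          rw [hφgenA m h1 h2, map_mul, map_mul, map_inv, hψw, hαm m h1 h2]; group
    · by_cases h1 : (m : ℕ) = k - 1
      · obtain rfl : m = a := Fin.ext h1
        show ψ (φ B) = B
        rw [hφB, hβk]
      · by_cases h2 : (m : ℕ) = k
        · obtain rfl : m = b := Fin.ext h2
          show ψ (φ (genB g b)) = genB g b
          rw [hφβb, map_mul, map_mul, map_mul, map_inv, hψw, hβk, hβk1]; group
        · show ψ (φ (genB g m)) = genB g m
          rw [hφgenB m h1 h2, map_mul, map_mul, map_inv, hψw, hβm m h1 h2]; group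
  -- φ ∘ ψ = id on generators
  have hφψ : ∀ x, φ (ψ (FreeGroup.of x)) = FreeGroup.of x := by
    rintro (m | m)
    · by_cases h1 : (m : ℕ) = k - 1
      · obtain rfl : m = a := Fin.ext h1
        show φ (ψ (genA g a)) = genA g a
        rw [hαk, map_mul, hφA, hφαa]; group
      · by_cases h2 : (m : ℕ) = k
        · obtain rfl : m = b := Fin.ext h2
          show φ (ψ A) = A
          rw [hαk1, map_mul, map_mul, map_inv, hφA, hφB, hw]; group
        · show φ (ψ (genA g m)) = genA g m
          rw [hαm m h1 h2, map_mul, map_mul, map_inv, hφA, hφgenA m h1 h2]; group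
    · by_cases h1 : (m : ℕ) = k - 1
      · obtain rfl : m = a := Fin.ext h1
        show φ (ψ B) = B
        rw [hβk, hφB]
      · by_cases h2 : (m : ℕ) = k
        · obtain rfl : m = b := Fin.ext h2
          show φ (ψ (genB g b)) = genB g b
          rw [hβk1, map_mul, map_mul, map_mul, map_inv, map_inv, hφA, hφB, hφβb]; group
        · show φ (ψ (genB g m)) = genB g m
          rw [hβm m h1 h2, map_mul, map_mul, map_inv, hφA, hφgenB m h1 h2]; group
  have e1 : ψ.comp φ = MonoidHom.id _ :=
    FreeGroup.ext_hom _ _ (by intro x; simpa using hψφ x)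
  have e2 : φ.comp ψ = MonoidHom.id _ :=
    FreeGroup.ext_hom _ _ (by intro x; simpa using hφψ x)
  have hleft : Function.LeftInverse φ ψ := fun y => by
    have := congrArg (fun f => f y) e2; simpa using this
  have hright : Function.RightInverse φ ψ := fun y => by
    have := congrArg (fun f => f y) e1; simpa using this
  refine ⟨⟨hleft.injective, hright.surjective⟩, ?_⟩
  -- the conjugation identity
  set u : ℕ → FreeGroup (Fin g ⊕ Fin g) := fun n => if n = k then B * A * B⁻¹ else A with hu
  have key : ∀ m : Fin g, ψ ⁅genA g m, genB g m⁆
      = u (m : ℕ) * ⁅genA g m, genB g m⁆ * (u ((m : ℕ) + 1))⁻¹ := by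
    intro m
    simp only [commutatorElement_def]
    by_cases h1 : (m : ℕ) = k - 1
    · obtain rfl : m = a := Fin.ext h1
      have hua : u ((a : ℕ)) = A := by
        simp [hu, ha, show ¬(k - 1 = k) from by omega]
      have hua1 : u ((a : ℕ) + 1) = B * A * B⁻¹ := by
        simp [hu, ha, show k - 1 + 1 = k from by omega]
      rw [map_mul, map_mul, map_mul, map_inv, map_inv, ← hB, hαk, hβk, hua, hua1]
      group
    · by_cases h2 : (m : ℕ) = k
      · obtain rfl : m = b := Fin.ext h2
        have hub : u ((b : ℕ)) = B * A * B⁻¹ := by simp [hu, hb]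
        have hub1 : u ((b : ℕ) + 1) = A := by
          simp [hu, hb, show ¬(k + 1 = k) from by omega]
        rw [map_mul, map_mul, map_mul, map_inv, map_inv, ← hA, hαk1, hβk1, hub, hub1]
        group
      · have hum : u ((m : ℕ)) = A := by simp [hu, h2]
        have hum1 : u ((m : ℕ) + 1) = A := by
          simp [hu, show ¬((m : ℕ) + 1 = k) from by omega]
        rw [map_mul, map_mul, map_mul, map_inv, map_inv, hαm m h1 h2, hβm m h1 h2,
          hum, hum1]
        group
  rw [surfaceRel, map_list_prod, List.map_ofFn]
  have : (List.ofFn ((fun x => ψ x) ∘ fun m : Fin g => ⁅genA g m, genB g m⁆))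
      = List.ofFn fun m : Fin g =>
        u (m : ℕ) * ⁅genA g m, genB g m⁆ * (u ((m : ℕ) + 1))⁻¹ :=
    congrArg List.ofFn (funext fun m => key m)
  rw [this, telescope_ofFn_prod g u (fun m : Fin g => ⁅genA g m, genB g m⁆)]
  have hu0 : u 0 = A := by simp [hu, show ¬(0 = k) from by omega]
  have hug : u g = A := by simp [hu, show ¬(g = k) from by omega]
  rw [hu0, hug, ← surfaceRel, hA]
end

section
/- Let M = ℤζ + ℤi + ℤj + ℤk ⊆ H_ℚ, where ζ = (1 + i + j + k)/2. There is no element m ∈ M such that the four elements m, i·m, j·m, k·m form a ℤ-basis of M; in particular M is not a free module of rank one over the ring H_ℤ = ℤ + ℤi + ℤj + ℤk (the Lipschitz order), which acts on M by left multiplication. -/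
open scoped Quaternion

/-- The element `i` of the rational quaternion algebra. -/
def qI : ℍ[ℚ, -1, -1] := ⟨0, 1, 0, 0⟩

/-- The element `j` of the rational quaternion algebra. -/
def qJ : ℍ[ℚ, -1, -1] := ⟨0, 0, 1, 0⟩

/-- The element `k` of the rational quaternion algebra. -/
def qK : ℍ[ℚ, -1, -1] := ⟨0, 0, 0, 1⟩

/-- The Hurwitz quaternion `ζ = (1 + i + j + k)/2`. -/
def qZeta : ℍ[ℚ, -1, -1] := (2 : ℚ)⁻¹ • (1 + qI + qJ + qK)

/-- The ring of Hurwitz integers `M = ℤζ + ℤi + ℤj + ℤk` as a ℤ-submodule of `ℍ[ℚ,-1,-1]`. -/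
def HurwitzM : Submodule ℤ ℍ[ℚ, -1, -1] :=
  Submodule.span ℤ ({qZeta, qI, qJ, qK} : Set ℍ[ℚ, -1, -1])

/-- The Lipschitz order `H_ℤ = ℤ + ℤi + ℤj + ℤk` as a ℤ-submodule of `ℍ[ℚ,-1,-1]`. -/
def LipschitzHZ : Submodule ℤ ℍ[ℚ, -1, -1] :=
  Submodule.span ℤ ({1, qI, qJ, qK} : Set ℍ[ℚ, -1, -1])

lemma zeta_mem : qZeta ∈ HurwitzM := Submodule.subset_span (by simp)
lemma i_mem : qI ∈ HurwitzM := Submodule.subset_span (by simp)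
lemma j_mem : qJ ∈ HurwitzM := Submodule.subset_span (by simp)
lemma k_mem : qK ∈ HurwitzM := Submodule.subset_span (by simp)

lemma one_eq : (1 : ℍ[ℚ,-1,-1]) = qZeta + qZeta - qI - qJ - qK := by
  ext <;> simp [qZeta, qI, qJ, qK] <;> norm_num

lemma one_mem : (1 : ℍ[ℚ,-1,-1]) ∈ HurwitzM := by
  rw [one_eq]
  exact sub_mem (sub_mem (sub_mem (add_mem zeta_mem zeta_mem) i_mem) j_mem) k_mem

lemma zeta_mul_mem : ∀ y ∈ HurwitzM, qZeta * y ∈ HurwitzM := by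
  intro y hy
  induction hy using Submodule.span_induction with
  | mem x hx =>
    rcases hx with h | h | h | h
    · have e : qZeta * x = qZeta - 1 := by
        rw [h]; ext <;> simp [qZeta, qI, qJ, qK] <;> norm_num
      rw [e]; exact sub_mem zeta_mem one_mem
    · have e : qZeta * x = qZeta - 1 - qK := by
        rw [h]; ext <;> simp [qZeta, qI, qJ, qK] <;> norm_num
      rw [e]; exact sub_mem (sub_mem zeta_mem one_mem) k_mem
    · have e : qZeta * x = qZeta - 1 - qI := by
        rw [h]; ext <;> simp [qZeta, qI, qJ, qK] <;> norm_num
      rw [e]; exact sub_mem (sub_mem zeta_mem one_mem) i_mem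
    · have e : qZeta * x = qZeta - 1 - qJ := by
        rw [h]; ext <;> simp [qZeta, qI, qJ, qK] <;> norm_num
      rw [e]; exact sub_mem (sub_mem zeta_mem one_mem) j_mem
  | zero => simpa using (HurwitzM.zero_mem)
  | add x y hx hy ihx ihy => rw [mul_add]; exact add_mem ihx ihy
  | smul a x hx ih => rw [mul_smul_comm]; exact Submodule.smul_mem _ _ ih

lemma re_int_of_mem : ∀ h ∈ LipschitzHZ, ∃ n : ℤ, h.re = (n : ℚ) := by
  intro h hh
  induction hh using Submodule.span_induction with
  | mem x hx =>
    rcases hx with h | h | h | h <;> subst h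
    · exact ⟨1, by simp⟩
    · exact ⟨0, by simp [qI]⟩
    · exact ⟨0, by simp [qJ]⟩
    · exact ⟨0, by simp [qK]⟩
  | zero => exact ⟨0, by simp⟩
  | add x y hx hy ihx ihy =>
    obtain ⟨n, hn⟩ := ihx; obtain ⟨m, hm⟩ := ihy
    exact ⟨n + m, by simp [hn, hm]⟩
  | smul a x hx ih =>
    obtain ⟨n, hn⟩ := ih
    exact ⟨a * n, by simp [hn]⟩

lemma zeta_re : qZeta.re = 2⁻¹ := by norm_num [qZeta, qI, qJ, qK]

noncomputable def qDivRing : DivisionRing ℍ[ℚ,-1,-1] := inferInstanceAs (DivisionRing (Quaternion ℚ))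

lemma half_not_int (n : ℤ) : (n : ℚ) ≠ 2⁻¹ := by
  intro h
  have : (2 * n : ℤ) = (1 : ℤ) := by
    have : (2 * (n:ℚ)) = 1 := by linarith
    exact_mod_cast this
  omega

/-- There is no `m ∈ M` such that `m, i·m, j·m, k·m` form a ℤ-basis of `M`;
in particular `M` is not a free module of rank one over the Lipschitz order
`H_ℤ = ℤ + ℤi + ℤj + ℤk` acting by left multiplication. -/
theorem hurwitz_not_free_over_lipschitz :
    (¬ ∃ m ∈ HurwitzM,
        LinearIndependent ℤ ![m, qI * m, qJ * m, qK * m] ∧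
        Submodule.span ℤ ({m, qI * m, qJ * m, qK * m} : Set ℍ[ℚ, -1, -1]) = HurwitzM) ∧
    (¬ ∃ m ∈ HurwitzM, ∀ y ∈ HurwitzM,
        ∃! h : ℍ[ℚ, -1, -1], h ∈ LipschitzHZ ∧ h * m = y) := by
  constructor
  · rintro ⟨m, hmM, hli, hspan⟩
    have hm0 : m ≠ 0 := by simpa using hli.ne_zero 0
    have hz : qZeta * m ∈ Submodule.span ℤ ({m, qI * m, qJ * m, qK * m} : Set ℍ[ℚ, -1, -1]) := by
      rw [hspan]; exact zeta_mul_mem m hmM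
    rw [Submodule.mem_span_insert] at hz
    obtain ⟨a, z1, hz1, he1⟩ := hz
    rw [Submodule.mem_span_insert] at hz1
    obtain ⟨b, z2, hz2, he2⟩ := hz1
    rw [Submodule.mem_span_insert] at hz2
    obtain ⟨c, z3, hz3, he3⟩ := hz2
    rw [Submodule.mem_span_singleton] at hz3
    obtain ⟨d, he4⟩ := hz3
    have key : qZeta * m = (a • 1 + b • qI + c • qJ + d • qK) * m := by
      rw [he1, he2, he3, ← he4]
      simp only [add_mul, smul_mul_assoc, one_mul]
      simp [smul_smul, mul_assoc, add_assoc]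
    have hq : qZeta = a • 1 + b • qI + c • qJ + d • qK := @mul_right_cancel₀ _ qDivRing.toMul qDivRing.toZero (@IsCancelMulZero.toIsRightCancelMulZero _ qDivRing.toMul qDivRing.toZero (letI := qDivRing; inferInstance)) _ _ _ hm0 key
    have := congrArg QuaternionAlgebra.re hq
    simp [zeta_re, qI, qJ, qK] at this
    exact half_not_int a this.symm
  · rintro ⟨m, hmM, hprop⟩
    have hm0 : m ≠ 0 := by
      intro h0
      obtain ⟨h, _, huniq⟩ := hprop m hmM
      have e1 : (1 : ℍ[ℚ,-1,-1]) = h :=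
        huniq 1 ⟨Submodule.subset_span (by simp), by simp [h0]⟩
      have e0 : (0 : ℍ[ℚ,-1,-1]) = h :=
        huniq 0 ⟨Submodule.zero_mem _, by simp [h0]⟩
      exact one_ne_zero (e1.trans e0.symm)
    obtain ⟨h, ⟨hhL, hhm⟩, _⟩ := hprop (qZeta * m) (zeta_mul_mem m hmM)
    have hq : h = qZeta := @mul_right_cancel₀ _ qDivRing.toMul qDivRing.toZero (@IsCancelMulZero.toIsRightCancelMulZero _ qDivRing.toMul qDivRing.toZero (letI := qDivRing; inferInstance)) _ _ _ hm0 hhm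
    obtain ⟨n, hn⟩ := re_int_of_mem h hhL
    rw [hq, zeta_re] at hn
    exact half_not_int n hn.symm
end

section
/- Let L be the function field over ℂ of the genus-2 curve y² = x⁵ − x, i.e., L is the fraction field of ℂ[x,y]/(y² − x⁵ + x). Then there exist ℂ-algebra automorphisms σ and τ of L with σ(x) = −x, σ(y) = iy, τ(x) = x⁻¹, τ(y) = i·y·x⁻³ (where i ∈ ℂ is a fixed square root of −1), and these satisfy σ⁴ = 1, σ² = τ², σ² ≠ 1, and τστ⁻¹ = σ⁻¹; consequently the subgroup of Aut_ℂ(L) generated by σ and τ is isomorphic to the quaternion group Q of order 8, via σ ↦ i, τ ↦ j. -/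
open Polynomial

namespace Q8Aux

noncomputable section

/-- The defining polynomial `Y^2 - (X^5 - X)` in `(ℂ[X])[Y]`. -/
def fp : Polynomial (Polynomial ℂ) := X ^ 2 - C ((X : Polynomial ℂ) ^ 5 - X)

lemma fp_monic : fp.Monic := by
  apply monic_X_pow_sub
  exact (degree_C_le).trans_lt (by norm_num)

lemma fp_natDegree : fp.natDegree = 2 := natDegree_X_pow_sub_C

/-- Evaluation `X ↦ a`, `Y ↦ b`. -/
def gm {L : Type} [Field L] [Algebra ℂ L] (a b : L) : Polynomial (Polynomial ℂ) →+* L :=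
  eval₂RingHom ((Polynomial.aeval a : Polynomial ℂ →ₐ[ℂ] L) : Polynomial ℂ →+* L) b

variable {L : Type} [Field L] [Algebra ℂ L]

@[simp] lemma gm_C (a b : L) (p : Polynomial ℂ) : gm a b (C p) = Polynomial.aeval a p := by
  simp [gm]

@[simp] lemma gm_X (a b : L) : gm a b (X : Polynomial (Polynomial ℂ)) = b := by
  simp [gm]

lemma gm_fp (a b : L) (hab : b ^ 2 = a ^ 5 - a) : gm a b fp = 0 := by
  simp [fp, hab]

lemma dvd_of_gm_eq_zero {a b : L} (ha : Transcendental ℂ a)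
    (hb : b ∉ IntermediateField.adjoin ℂ ({a} : Set L)) (hab : b ^ 2 = a ^ 5 - a)
    {p : Polynomial (Polynomial ℂ)} (hp : gm a b p = 0) : fp ∣ p := by
  rw [← modByMonic_eq_zero_iff_dvd fp_monic]
  set r := p %ₘ fp with hr
  have hdeg : r.natDegree ≤ 1 := by
    have h1 : r.natDegree < fp.natDegree := by
      apply natDegree_modByMonic_lt p fp_monic
      intro h
      have := congrArg natDegree h
      rw [fp_natDegree, natDegree_one] at this
      norm_num at this
    rw [fp_natDegree] at h1
    omega
  have hrep := eq_X_add_C_of_natDegree_le_one hdeg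
  have hgr : gm a b r = 0 := by
    have hpd := modByMonic_add_div p fp
    have h2 : gm a b r + gm a b fp * gm a b (p /ₘ fp) = gm a b p := by
      rw [← map_mul, ← map_add, hpd]
    rw [gm_fp a b hab, hp, zero_mul, add_zero] at h2
    exact h2
  rw [hrep] at hgr
  simp only [map_add, map_mul, gm_C, gm_X] at hgr
  have hmem : ∀ q : Polynomial ℂ,
      Polynomial.aeval a q ∈ IntermediateField.adjoin ℂ ({a} : Set L) := by
    intro q
    apply IntermediateField.algebra_adjoin_le_adjoin
    rw [Algebra.adjoin_singleton_eq_range_aeval]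
    exact ⟨q, rfl⟩
  have h1 : Polynomial.aeval a (r.coeff 1) = 0 := by
    by_contra hne
    apply hb
    have hbeq : b = -Polynomial.aeval a (r.coeff 0) / Polynomial.aeval a (r.coeff 1) := by
      field_simp
      linear_combination hgr
    rw [hbeq]
    exact div_mem (neg_mem (hmem _)) (hmem _)
  have h0 : Polynomial.aeval a (r.coeff 0) = 0 := by
    rw [h1, zero_mul, zero_add] at hgr
    exact hgr
  have hc1 : r.coeff 1 = 0 := transcendental_iff.mp ha _ h1
  have hc0 : r.coeff 0 = 0 := transcendental_iff.mp ha _ h0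
  rw [hrep, hc1, hc0]
  simp

lemma exists_algHom {x y : L}
    (hx : Transcendental ℂ x)
    (hxy : y ^ 2 = x ^ 5 - x)
    (hy : y ∉ IntermediateField.adjoin ℂ ({x} : Set L))
    (hgen : IntermediateField.adjoin ℂ ({x, y} : Set L) = ⊤)
    {a b : L} (ha : Transcendental ℂ a) (hab : b ^ 2 = a ^ 5 - a)
    (hb : b ∉ IntermediateField.adjoin ℂ ({a} : Set L)) :
    ∃ ψ : L →ₐ[ℂ] L, ψ x = a ∧ ψ y = b := by
  classical
  have hfpne : fp ≠ 0 := fp_monic.ne_zero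
  have hkerx : Ideal.span {fp} = RingHom.ker (gm x y) := by
    apply le_antisymm
    · rw [Ideal.span_le]
      intro q hq
      rcases hq with rfl
      exact gm_fp x y hxy
    · intro p hp
      exact Ideal.mem_span_singleton.mpr (dvd_of_gm_eq_zero hx hy hxy hp)
  have hprime : Prime fp := by
    rw [← Ideal.span_singleton_prime hfpne, hkerx]
    exact RingHom.ker_isPrime _
  haveI : IsDomain (AdjoinRoot fp) := AdjoinRoot.isDomain_of_prime hprime
  set M := FractionRing (AdjoinRoot fp) with hM
  have key : ∀ (a b : L), Transcendental ℂ a → b ^ 2 = a ^ 5 - a →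
      b ∉ IntermediateField.adjoin ℂ ({a} : Set L) →
      ∃ E : M →+* L,
        ∀ p, E (algebraMap (AdjoinRoot fp) M (AdjoinRoot.mk fp p)) = gm a b p := by
    intro a b ha hab hb
    have h0 : fp.eval₂ ((Polynomial.aeval a : Polynomial ℂ →ₐ[ℂ] L) : Polynomial ℂ →+* L) b = 0 :=
      gm_fp a b hab
    set g : AdjoinRoot fp →+* L := AdjoinRoot.lift _ b h0 with hg
    have hginj : Function.Injective g := by
      rw [injective_iff_map_eq_zero]
      intro z hz
      obtain ⟨p, rfl⟩ := AdjoinRoot.mk_surjective (g := fp) z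
      rw [hg, AdjoinRoot.lift_mk] at hz
      rw [AdjoinRoot.mk_eq_zero]
      exact dvd_of_gm_eq_zero ha hb hab hz
    refine ⟨IsFractionRing.lift hginj, fun p => ?_⟩
    rw [IsFractionRing.lift_algebraMap, hg, AdjoinRoot.lift_mk]
    rfl
  obtain ⟨E0, hE0⟩ := key x y hx hxy hy
  obtain ⟨E1, hE1⟩ := key a b ha hab hb
  have hE0inj : Function.Injective E0 := E0.injective
  have hE0surj : Function.Surjective E0 := by
    have hxr : x ∈ E0.fieldRange := ⟨_, (hE0 (C X)).trans (by rw [gm_C]; simp)⟩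
    have hyr : y ∈ E0.fieldRange := ⟨_, (hE0 X).trans (gm_X x y)⟩
    have halg : ∀ c : ℂ, algebraMap ℂ L c ∈ E0.fieldRange := fun c =>
      ⟨_, (hE0 (C (C c))).trans (by rw [gm_C]; simp)⟩
    set IF : IntermediateField ℂ L := Subfield.toIntermediateField E0.fieldRange halg with hIF
    have hle : IntermediateField.adjoin ℂ ({x, y} : Set L) ≤ IF := by
      rw [IntermediateField.adjoin_le_iff]
      rintro z (rfl | hz)
      · exact hxr
      · rcases hz with rfl
        exact hyr
    intro z
    exact hle (hgen ▸ IntermediateField.mem_top)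
  set E0e : M ≃+* L := RingEquiv.ofBijective E0 ⟨hE0inj, hE0surj⟩ with hE0e
  set φ : L →+* L := E1.comp (E0e.symm : L ≃+* M).toRingHom with hφ
  have hφv : ∀ p, φ (gm x y p) = gm a b p := by
    intro p
    have h1 : E0e (algebraMap (AdjoinRoot fp) M (AdjoinRoot.mk fp p)) = gm x y p := hE0 p
    have h2 : E0e.symm (gm x y p) = algebraMap (AdjoinRoot fp) M (AdjoinRoot.mk fp p) := by
      rw [← h1, RingEquiv.symm_apply_apply]
    rw [hφ]
    simp only [RingHom.comp_apply, RingEquiv.toRingHom_eq_coe, RingEquiv.coe_toRingHom]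
    rw [h2]
    exact hE1 p
  refine ⟨{ toRingHom := φ, commutes' := fun c => ?_ }, ?_, ?_⟩
  · have := hφv (C (C c))
    rw [gm_C, gm_C] at this
    simpa using this
  · have := hφv (C X)
    rw [gm_C, gm_C] at this
    simpa using this
  · have := hφv X
    rw [gm_X, gm_X] at this
    exact this

lemma ext_gen {x y : L}
    (hgen : IntermediateField.adjoin ℂ ({x, y} : Set L) = ⊤)
    {f g : L ≃ₐ[ℂ] L} (h1 : f x = g x) (h2 : f y = g y) : f = g := by
  have key : ∀ z : L, f z = g z := by
    set SF : Subfield L := RingHom.eqLocusField (f : L →+* L) (g : L →+* L) with hSF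
    have halg : ∀ c : ℂ, algebraMap ℂ L c ∈ SF := fun c => by
      show f _ = g _
      simp
    set IF : IntermediateField ℂ L := Subfield.toIntermediateField SF halg with hIF
    have hle : IntermediateField.adjoin ℂ ({x, y} : Set L) ≤ IF := by
      rw [IntermediateField.adjoin_le_iff]
      rintro z (rfl | hz)
      · exact h1
      · rcases hz with rfl
        exact h2
    intro z
    exact hle (hgen ▸ IntermediateField.mem_top)
  exact AlgEquiv.ext key

lemma transcendental_neg {a : L} (ha : Transcendental ℂ a) : Transcendental ℂ (-a) := by
  rw [transcendental_iff] at ha ⊢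
  intro p hp
  have h1 : Polynomial.aeval a (p.comp (-X)) = 0 := by
    rw [aeval_comp]
    simpa using hp
  have h2 := ha _ h1
  have h3 : p = (p.comp (-X)).comp (-X) := by
    rw [comp_assoc]
    simp
  rw [h3, h2, zero_comp]

lemma adjoin_singleton_congr {a b : L}
    (h1 : a ∈ IntermediateField.adjoin ℂ ({b} : Set L))
    (h2 : b ∈ IntermediateField.adjoin ℂ ({a} : Set L)) :
    IntermediateField.adjoin ℂ ({a} : Set L) = IntermediateField.adjoin ℂ ({b} : Set L) := by
  apply le_antisymm
  · rw [IntermediateField.adjoin_le_iff]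
    intro z hz
    rcases hz with rfl
    exact h1
  · rw [IntermediateField.adjoin_le_iff]
    intro z hz
    rcases hz with rfl
    exact h2

variable {G : Type*} [Group G]

def Fq (σ τ : G) : QuaternionGroup 2 → G
  | .a i => σ ^ i.val
  | .xa i => τ * σ ^ i.val

section
variable {σ τ : G} (hσ4 : σ ^ 4 = 1) (hτ2 : τ ^ 2 = σ ^ 2) (hστ : σ * τ = τ * σ ^ 3)
include hσ4

lemma pow_mod (m : ℕ) : σ ^ m = σ ^ (m % 4) := by
  conv_lhs => rw [← Nat.div_add_mod m 4]
  rw [pow_add, pow_mul, hσ4, one_pow, one_mul]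

omit hσ4 in
include hστ in
lemma pow_comm_tau (m : ℕ) : σ ^ m * τ = τ * σ ^ (3 * m) := by
  induction m with
  | zero => simp
  | succ n ih =>
    rw [pow_succ, mul_assoc, hστ, ← mul_assoc, ih, mul_assoc, ← pow_add]
    ring_nf

include hτ2 hστ in
lemma Fq_mul (g h : QuaternionGroup 2) : Fq σ τ (g * h) = Fq σ τ g * Fq σ τ h := by
  have key : ∀ m n : ℕ, m % 4 = n % 4 → σ ^ m = σ ^ n := by
    intro m n h
    rw [pow_mod hσ4 m, pow_mod hσ4 n, h]
  rcases g with i | i <;> rcases h with j | j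
  · show σ ^ (i + j).val = σ ^ i.val * σ ^ j.val
    rw [← pow_add]
    exact key _ _ (by revert i j; decide)
  · show τ * σ ^ (j - i).val = σ ^ i.val * (τ * σ ^ j.val)
    rw [← mul_assoc, pow_comm_tau hστ, mul_assoc, ← pow_add]
    congr 1
    exact key _ _ (by revert i j; decide)
  · show τ * σ ^ (i + j).val = τ * σ ^ i.val * σ ^ j.val
    rw [mul_assoc, ← pow_add]
    congr 1
    exact key _ _ (by revert i j; decide)
  · show σ ^ ((2 : ZMod (2 * 2)) + j - i).val = τ * σ ^ i.val * (τ * σ ^ j.val)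
    rw [mul_assoc, ← mul_assoc (σ ^ i.val), pow_comm_tau hστ, ← mul_assoc, ← mul_assoc,
      show τ * τ = σ ^ 2 from by rw [← pow_two, hτ2], mul_assoc, ← pow_add, ← pow_add]
    exact key _ _ (by revert i j; decide)
end

end

end Q8Aux

/-- Let `L` be the function field over ℂ of the genus-2 curve `y² = x⁵ − x`
(abstractly: `L` is a field extension of ℂ generated by elements `x, y` with `x`
transcendental over ℂ, `y² = x⁵ − x` and `y ∉ ℂ(x)`).  Then there exist ℂ-algebra
automorphisms `σ, τ` of `L` with `σ(x) = −x`, `σ(y) = i·y`, `τ(x) = x⁻¹`,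
`τ(y) = i·y·x⁻³`, satisfying `σ⁴ = 1`, `σ² = τ²`, `σ² ≠ 1` and `τστ⁻¹ = σ⁻¹`;
consequently the subgroup of `Aut_ℂ(L)` generated by `σ` and `τ` is isomorphic to the
quaternion group `Q₈` of order 8, via `σ ↦ i`, `τ ↦ j`. -/
theorem genus_two_curve_quaternionic_automorphisms
    (L : Type) [Field L] [Algebra ℂ L]
    (x y : L)
    (hx : Transcendental ℂ x)
    (hxy : y ^ 2 = x ^ 5 - x)
    (hy : y ∉ IntermediateField.adjoin ℂ ({x} : Set L))
    (hgen : IntermediateField.adjoin ℂ ({x, y} : Set L) = ⊤) :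
    ∃ σ τ : L ≃ₐ[ℂ] L,
      σ x = -x ∧ σ y = Complex.I • y ∧
      τ x = x⁻¹ ∧ τ y = Complex.I • (y * x⁻¹ ^ 3) ∧
      σ ^ 4 = 1 ∧ σ ^ 2 = τ ^ 2 ∧ σ ^ 2 ≠ 1 ∧ τ * σ * τ⁻¹ = σ⁻¹ ∧
      ∃ e : (Subgroup.closure ({σ, τ} : Set (L ≃ₐ[ℂ] L))) ≃* QuaternionGroup 2,
        e ⟨σ, Subgroup.subset_closure (by simp)⟩ = QuaternionGroup.a 1 ∧
        e ⟨τ, Subgroup.subset_closure (by simp)⟩ = QuaternionGroup.xa 0 := by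
  classical
  haveI : CharZero L := (RingHom.charZero_iff (algebraMap ℂ L).injective).mp inferInstance
  have hx0 : x ≠ 0 := fun h => hx (h ▸ isAlgebraic_zero)
  have hy0 : y ≠ 0 := fun h => hy (h ▸ zero_mem _)
  have hxx : x ∈ IntermediateField.adjoin ℂ ({x} : Set L) :=
    IntermediateField.mem_adjoin_simple_self ℂ x
  -- σ data
  have haσ : Transcendental ℂ (-x) := Q8Aux.transcendental_neg hx
  have habσ : (Complex.I • y) ^ 2 = (-x) ^ 5 - (-x) := by
    rw [_root_.smul_pow, Complex.I_sq, hxy, neg_one_smul]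
    ring
  have hadjσ : IntermediateField.adjoin ℂ ({-x} : Set L)
      = IntermediateField.adjoin ℂ ({x} : Set L) :=
    Q8Aux.adjoin_singleton_congr
      (by simpa using neg_mem hxx)
      (by simpa using neg_mem (IntermediateField.mem_adjoin_simple_self ℂ (-x)))
  have hbσ : Complex.I • y ∉ IntermediateField.adjoin ℂ ({-x} : Set L) := by
    rw [hadjσ]
    intro h
    apply hy
    have : y = (-Complex.I) • (Complex.I • y) := by
      rw [smul_smul]
      norm_num [Complex.I_mul_I]
    rw [this, Algebra.smul_def]
    exact mul_mem (IntermediateField.algebraMap_mem _ _) h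
  obtain ⟨ψσ, hψσx, hψσy⟩ := Q8Aux.exists_algHom hx hxy hy hgen haσ habσ hbσ
  -- τ data
  have haτ : Transcendental ℂ (x⁻¹ : L) := fun h => hx (IsAlgebraic.inv_iff.mp h)
  have habτ : (Complex.I • (y * x⁻¹ ^ 3)) ^ 2 = (x⁻¹ : L) ^ 5 - x⁻¹ := by
    rw [_root_.smul_pow, Complex.I_sq, neg_one_smul, mul_pow, hxy]
    field_simp
    ring_nf
    try simp
    try tauto
  have hadjτ : IntermediateField.adjoin ℂ ({x⁻¹} : Set L)
      = IntermediateField.adjoin ℂ ({x} : Set L) :=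
    Q8Aux.adjoin_singleton_congr
      (inv_mem hxx)
      (by simpa using inv_mem (IntermediateField.mem_adjoin_simple_self ℂ (x⁻¹ : L)))
  have hbτ : Complex.I • (y * x⁻¹ ^ 3) ∉ IntermediateField.adjoin ℂ ({x⁻¹} : Set L) := by
    rw [hadjτ]
    intro h
    apply hy
    have hyeq : y = (-Complex.I) • (Complex.I • (y * x⁻¹ ^ 3)) * x ^ 3 := by
      rw [smul_smul]
      norm_num [Complex.I_mul_I]
      field_simp
    rw [hyeq, Algebra.smul_def, mul_assoc]
    exact mul_mem (IntermediateField.algebraMap_mem _ _)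
      (mul_mem h (pow_mem hxx 3))
  obtain ⟨ψτ, hψτx, hψτy⟩ := Q8Aux.exists_algHom hx hxy hy hgen haτ habτ hbτ
  -- bijectivity
  have hIinv : (-Complex.I) * Complex.I = 1 := by
    norm_num [Complex.I_mul_I]
  have hsurj : ∀ (ψ : L →ₐ[ℂ] L), (∃ u, ψ u = x) → (∃ v, ψ v = y) →
      Function.Bijective ψ := by
    intro ψ hu hv
    refine ⟨ψ.toRingHom.injective, ?_⟩
    have hle : IntermediateField.adjoin ℂ ({x, y} : Set L) ≤ ψ.fieldRange := by
      rw [IntermediateField.adjoin_le_iff]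
      rintro z (rfl | hz)
      · exact hu
      · rcases hz with rfl
        exact hv
    intro z
    exact hle (hgen ▸ IntermediateField.mem_top)
  have hx31 : x⁻¹ ^ 3 * x ^ 3 = 1 := by field_simp
  have hbijσ : Function.Bijective ψσ := by
    refine hsurj ψσ ⟨-x, ?_⟩ ⟨(-Complex.I) • y, ?_⟩
    · rw [map_neg, hψσx, neg_neg]
    · rw [Algebra.smul_def, map_mul, AlgHom.commutes, hψσy, Algebra.smul_def,
        ← mul_assoc, ← map_mul, hIinv, map_one, one_mul]
  have hbijτ : Function.Bijective ψτ := by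
    refine hsurj ψτ ⟨x⁻¹, ?_⟩ ⟨(-Complex.I) • (y * x⁻¹ ^ 3), ?_⟩
    · rw [map_inv₀, hψτx, inv_inv]
    · rw [Algebra.smul_def, map_mul, AlgHom.commutes, map_mul, hψτy, map_pow, map_inv₀,
        hψτx, inv_inv, Algebra.smul_def]
      rw [show algebraMap ℂ L (-Complex.I) * (algebraMap ℂ L Complex.I * (y * x⁻¹ ^ 3) * x ^ 3)
          = (algebraMap ℂ L (-Complex.I) * algebraMap ℂ L Complex.I) * y * (x⁻¹ ^ 3 * x ^ 3)
          from by ring, ← map_mul, hIinv, map_one, hx31]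
      ring
  set σ : L ≃ₐ[ℂ] L := AlgEquiv.ofBijective ψσ hbijσ with hσdef
  set τ : L ≃ₐ[ℂ] L := AlgEquiv.ofBijective ψτ hbijτ with hτdef
  have hσx : σ x = -x := hψσx
  have hσy : σ y = Complex.I • y := hψσy
  have hτx : τ x = x⁻¹ := hψτx
  have hτy : τ y = Complex.I • (y * x⁻¹ ^ 3) := hψτy
  -- pointwise computations
  have hiL : ∀ f : L ≃ₐ[ℂ] L, f (algebraMap ℂ L Complex.I) = algebraMap ℂ L Complex.I :=
    fun f => f.commutes _
  set iL := algebraMap ℂ L Complex.I with hiLdef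
  have hI2 : iL * iL = -1 := by
    rw [hiLdef, ← map_mul, Complex.I_mul_I, map_neg, map_one]
  have hσy' : σ y = iL * y := by rw [hσy, Algebra.smul_def]
  have hτy' : τ y = iL * (y * x⁻¹ ^ 3) := by rw [hτy, Algebra.smul_def]
  have hσ2x : (σ * σ) x = x := by
    rw [AlgEquiv.mul_apply, hσx, map_neg, hσx, neg_neg]
  have hσ2y : (σ * σ) y = -y := by
    rw [AlgEquiv.mul_apply, hσy', map_mul, hiL, hσy', ← mul_assoc, hI2]
    ring
  have hτ2x : (τ * τ) x = x := by
    rw [AlgEquiv.mul_apply, hτx, map_inv₀, hτx, inv_inv]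
  have hτ2y : (τ * τ) y = -y := by
    rw [AlgEquiv.mul_apply, hτy', map_mul, hiL, map_mul, hτy', map_pow, map_inv₀, hτx, inv_inv]
    rw [show iL * (iL * (y * x⁻¹ ^ 3) * x ^ 3) = iL * iL * y * (x⁻¹ ^ 3 * x ^ 3) from by ring,
      hI2, hx31]
    ring
  have hsq : ∀ f : L ≃ₐ[ℂ] L, f ^ 2 = f * f := fun f => by rw [pow_two]
  have h4 : ∀ f : L ≃ₐ[ℂ] L, f ^ 4 = (f * f) * (f * f) := fun f => by
    rw [show (4 : ℕ) = 2 + 2 from rfl, pow_add, pow_two]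
  have hσ4 : σ ^ 4 = 1 := by
    apply Q8Aux.ext_gen hgen
    · rw [h4, AlgEquiv.mul_apply, hσ2x, hσ2x, AlgEquiv.one_apply]
    · rw [h4, AlgEquiv.mul_apply, hσ2y, map_neg, hσ2y, neg_neg, AlgEquiv.one_apply]
  have hστeq : σ ^ 2 = τ ^ 2 := by
    apply Q8Aux.ext_gen hgen
    · rw [hsq, hsq, hσ2x, hτ2x]
    · rw [hsq, hsq, hσ2y, hτ2y]
  have hσ2ne : σ ^ 2 ≠ 1 := by
    intro h
    have h1 : (σ ^ 2) y = y := by rw [h, AlgEquiv.one_apply]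
    rw [hsq, hσ2y] at h1
    have h2 : (2 : L) * y = 0 := by linear_combination - h1
    rcases mul_eq_zero.mp h2 with h2 | h2
    · exact two_ne_zero h2
    · exact hy0 h2
  have hσ3x : (σ * (σ * σ)) x = -x := by
    rw [AlgEquiv.mul_apply, hσ2x, hσx]
  have hσ3y : (σ * (σ * σ)) y = -(iL * y) := by
    rw [AlgEquiv.mul_apply, hσ2y, map_neg, hσy']
  have h3 : σ ^ 3 = σ * (σ * σ) := by
    rw [pow_succ, pow_two]
    rw [mul_assoc]  -- σ^1? adjust below if needed
  have hcomm : σ * τ = τ * σ ^ 3 := by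
    rw [h3]
    apply Q8Aux.ext_gen hgen
    · rw [AlgEquiv.mul_apply, AlgEquiv.mul_apply, hσ3x, hτx, map_neg, hτx, map_inv₀, hσx,
        inv_neg]
    · rw [AlgEquiv.mul_apply, AlgEquiv.mul_apply, hσ3y, hτy', map_mul, hiL, map_mul, hσy',
        map_pow, map_inv₀, hσx, map_neg, map_mul, hiL, hτy', inv_neg]
      ring
  have hσ3inv : σ ^ 3 = σ⁻¹ := by
    apply eq_inv_of_mul_eq_one_left
    rw [← pow_succ]
    exact hσ4
  have hconj : τ * σ * τ⁻¹ = σ⁻¹ := by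
    have h1 : τ * σ = σ⁻¹ * τ := by
      calc τ * σ = σ⁻¹ * (σ * τ) * σ := by group
      _ = σ⁻¹ * (τ * σ ^ 3) * σ := by rw [hcomm]
      _ = σ⁻¹ * τ * σ ^ 4 := by group
      _ = σ⁻¹ * τ := by rw [hσ4, mul_one]
    rw [h1, mul_assoc, mul_inv_cancel, mul_one]
  refine ⟨σ, τ, hσx, hσy, hτx, hτy, hσ4, hστeq, hσ2ne, hconj, ?_⟩
  -- the quaternion group isomorphism
  set F : QuaternionGroup 2 →* (L ≃ₐ[ℂ] L) :=
    MonoidHom.mk' (Q8Aux.Fq σ τ) (Q8Aux.Fq_mul hσ4 hστeq.symm hcomm) with hF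
  have hFa : ∀ i : ZMod (2 * 2), F (QuaternionGroup.a i) = σ ^ i.val := fun i => by
    rw [hF]; rfl
  have hFxa : ∀ i : ZMod (2 * 2), F (QuaternionGroup.xa i) = τ * σ ^ i.val := fun i => by
    rw [hF]; rfl
  have hFa1 : F (QuaternionGroup.a 1) = σ := by
    rw [hFa, show ((1 : ZMod (2 * 2)).val) = 1 from by decide, pow_one]
  have hFxa0 : F (QuaternionGroup.xa 0) = τ := by
    rw [hFxa, show ((0 : ZMod (2 * 2)).val) = 0 from by decide, pow_zero, mul_one]
  have hσ1 : σ ≠ 1 := by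
    intro h
    have h1 : σ x = x := by rw [h, AlgEquiv.one_apply]
    rw [hσx] at h1
    have h2 : (2 : L) * x = 0 := by linear_combination - h1
    rcases mul_eq_zero.mp h2 with h2 | h2
    · exact two_ne_zero h2
    · exact hx0 h2
  have hσ3ne : σ ^ 3 ≠ 1 := by
    intro h
    have h1 : (σ ^ 3) x = x := by rw [h, AlgEquiv.one_apply]
    rw [h3, hσ3x] at h1
    have h2 : (2 : L) * x = 0 := by linear_combination - h1
    rcases mul_eq_zero.mp h2 with h2 | h2
    · exact two_ne_zero h2
    · exact hx0 h2
  have hpm : ∀ k : ℕ, (σ ^ k) x = x ∨ (σ ^ k) x = -x := by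
    intro k
    induction k with
    | zero => left; simp
    | succ n ih =>
      rw [pow_succ, AlgEquiv.mul_apply, hσx, map_neg]
      rcases ih with h | h
      · right; rw [h]
      · left; rw [h, neg_neg]
  have hτnotpow : ∀ k : ℕ, τ * σ ^ k ≠ 1 := by
    intro k h
    have h1 : (τ * σ ^ k) x = x := by rw [h, AlgEquiv.one_apply]
    rw [AlgEquiv.mul_apply] at h1
    rcases hpm k with h2 | h2 <;> rw [h2] at h1
    · rw [hτx] at h1
      apply hx
      refine ⟨X ^ 2 - C 1, (monic_X_pow_sub_C (1 : ℂ) two_ne_zero).ne_zero, ?_⟩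
      simp only [map_sub, map_pow, aeval_X, aeval_C, map_one]
      have h3 : x * x = 1 := by
        nth_rewrite 2 [← h1]
        exact mul_inv_cancel₀ hx0
      rw [pow_two, h3, sub_self]
    · rw [map_neg, hτx] at h1
      apply hx
      refine ⟨X ^ 2 + C 1, ?_, ?_⟩
      · rw [show (X ^ 2 + C (1 : ℂ)) = X ^ 2 - C (-1) from by rw [map_neg, sub_neg_eq_add]]
        exact (monic_X_pow_sub_C (-1 : ℂ) two_ne_zero).ne_zero
      · simp only [map_add, map_pow, aeval_X, aeval_C, map_one]
        have h4 : x * (-x⁻¹) = x * x := by rw [h1]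
        rw [mul_neg, mul_inv_cancel₀ hx0] at h4
        rw [pow_two, ← h4]
        ring
  have hinj : Function.Injective F := by
    rw [injective_iff_map_eq_one]
    rintro (i | i) h
    · rw [hFa] at h
      have hv : i.val < 2 * 2 := ZMod.val_lt i
      have hc : i.val = 0 ∨ i.val = 1 ∨ i.val = 2 ∨ i.val = 3 := by omega
      rcases hc with h0 | h0 | h0 | h0
      · have hi : i = 0 := (ZMod.val_eq_zero i).mp h0
        rw [hi]
        exact QuaternionGroup.one_def.symm
      · rw [h0, pow_one] at h
        exact absurd h hσ1
      · rw [h0] at h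
        exact absurd (by rw [← h]) hσ2ne
      · rw [h0] at h
        exact absurd h hσ3ne
    · rw [hFxa] at h
      exact absurd h (hτnotpow i.val)
  have hσmem : σ ∈ Subgroup.closure ({σ, τ} : Set (L ≃ₐ[ℂ] L)) :=
    Subgroup.subset_closure (by simp)
  have hτmem : τ ∈ Subgroup.closure ({σ, τ} : Set (L ≃ₐ[ℂ] L)) :=
    Subgroup.subset_closure (by simp)
  have hmemF : ∀ g, F g ∈ Subgroup.closure ({σ, τ} : Set (L ≃ₐ[ℂ] L)) := by
    rintro (i | i)
    · rw [hFa]; exact pow_mem hσmem _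
    · rw [hFxa]; exact mul_mem hτmem (pow_mem hσmem _)
  set F' : QuaternionGroup 2 →* (Subgroup.closure ({σ, τ} : Set (L ≃ₐ[ℂ] L))) :=
    F.codRestrict _ hmemF with hF'
  have hinj' : Function.Injective F' := by
    intro g h hgh
    apply hinj
    exact congrArg Subtype.val hgh
  have hsurj' : Function.Surjective F' := by
    intro z
    have hle : Subgroup.closure ({σ, τ} : Set (L ≃ₐ[ℂ] L)) ≤ F.range := by
      rw [Subgroup.closure_le]
      rintro w hw
      rcases hw with rfl | hw
      · exact ⟨QuaternionGroup.a 1, hFa1⟩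
      · rcases hw with rfl
        exact ⟨QuaternionGroup.xa 0, hFxa0⟩
    obtain ⟨g, hg⟩ := hle z.2
    exact ⟨g, Subtype.ext hg⟩
  set iso : QuaternionGroup 2 ≃* (Subgroup.closure ({σ, τ} : Set (L ≃ₐ[ℂ] L))) :=
    MulEquiv.ofBijective F' ⟨hinj', hsurj'⟩ with hiso
  refine ⟨iso.symm, ?_, ?_⟩
  · rw [MulEquiv.symm_apply_eq]
    exact Subtype.ext hFa1.symm
  · rw [MulEquiv.symm_apply_eq]
    exact Subtype.ext hFxa0.symm
end
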